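/- The function Φ is holomorphic on Ω and has a critical point at (z₁,z₂) = (1/2, 1/4): both complex partial derivatives satisfy ∂Φ/∂z₁(1/2,1/4) = 0 and ∂Φ/∂z₂(1/2,1/4) = 0. -/

import Mathlib

open Real

/-- The dilogarithm `Li₂(z) = -∫₀¹ log(1 - t z)/t dt` (principal branch of `log`). -/
noncomputable def Li2 (z : ℂ) : ℂ :=
  -∫ t in (0:ℝ)..1, Complex.log (1 - (t:ℂ) * z) / (t:ℂ)

/-- The potential function of the Whitehead link (at `s₁ = s₂ = 1`). -/
noncomputable def Phi0 (z₁ z₂ : ℂ) : ℂ :=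
  (1 / (2 * (π:ℂ) * Complex.I)) *
    (Li2 (Complex.exp (-(2 * (π:ℂ) * Complex.I) * (z₁ + z₂)))
     - Li2 (Complex.exp (-(2 * (π:ℂ) * Complex.I) * z₂))
     + Li2 (Complex.exp (2 * (π:ℂ) * Complex.I * z₂))
     - Li2 (Complex.exp (2 * (π:ℂ) * Complex.I * (z₁ + z₂)))
     + Li2 (Complex.exp (2 * (π:ℂ) * Complex.I * z₁)))

/-- The domain `Ω = {(z₁,z₂) : 0 < Re z₁ < 1, 0 < Re z₂ < 1, 0 < Re (z₁+z₂) < 1}`. -/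
def OmegaSet : Set (ℂ × ℂ) :=
  {p | 0 < p.1.re ∧ p.1.re < 1 ∧ 0 < p.2.re ∧ p.2.re < 1 ∧
       0 < (p.1 + p.2).re ∧ (p.1 + p.2).re < 1}



set_option maxHeartbeats 1600000



lemma slit_of_cond {t : ℝ} {x : ℂ} (ht : t ∈ Set.Icc (0:ℝ) 1)
    (hx : x.im ≠ 0 ∨ x.re < 1) : 1 - (t:ℂ) * x ∈ Complex.slitPlane := by
  rw [Complex.mem_slitPlane_iff]
  rcases eq_or_lt_of_le ht.1 with h0 | h0
  · left; simp [← h0]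
  rcases hx with h | h
  · right
    simp only [Complex.sub_im, Complex.one_im, Complex.mul_im, Complex.ofReal_re,
      Complex.ofReal_im, zero_mul, add_zero, zero_sub, neg_ne_zero]
    exact mul_ne_zero (ne_of_gt h0) h
  · left
    simp only [Complex.sub_re, Complex.one_re, Complex.mul_re, Complex.ofReal_re,
      Complex.ofReal_im, zero_mul, sub_zero]
    rcases le_or_gt x.re 0 with h1 | h1
    · nlinarith
    · nlinarith [ht.2]

lemma li2_hasDerivAt {z : ℂ} (hz : z.im ≠ 0 ∨ z.re < 1) (hz0 : z ≠ 0) :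
    HasDerivAt Li2 (-(Complex.log (1 - z) / z)) z := by
  -- an open neighborhood contained in the condition set
  have hU : IsOpen {x : ℂ | x.im ≠ 0 ∨ x.re < 1} := by
    rw [Set.setOf_or]
    exact (isOpen_ne_fun Complex.continuous_im continuous_const).union
      (isOpen_lt Complex.continuous_re continuous_const)
  obtain ⟨ε, hε, hball⟩ := Metric.isOpen_iff.mp hU z hz
  set ε' := ε / 2 with hε'def
  have hε' : 0 < ε' := by positivity
  have hcb : Metric.closedBall z ε' ⊆ {x : ℂ | x.im ≠ 0 ∨ x.re < 1} := by
    refine subset_trans ?_ hball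
    exact (Metric.closedBall_subset_ball (by simp [hε'def]; linarith)).trans le_rfl
  -- all points 1 - t*x are in the slit plane
  have hslit : ∀ t ∈ Set.Icc (0:ℝ) 1, ∀ x ∈ Metric.closedBall z ε',
      1 - (t:ℂ) * x ∈ Complex.slitPlane := fun t ht x hx => slit_of_cond ht (hcb hx)
  -- compactness: a uniform lower bound δ for |1 - t x|
  have hK : IsCompact ((Set.Icc (0:ℝ) 1) ×ˢ Metric.closedBall z ε') :=
    isCompact_Icc.prod (isCompact_closedBall z ε')
  have hfc : Continuous fun p : ℝ × ℂ => ‖1 - (p.1:ℂ) * p.2‖ :=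
    continuous_norm.comp (continuous_const.sub
      ((Complex.continuous_ofReal.comp continuous_fst).mul continuous_snd))
  obtain ⟨p₀, hp₀, hmin⟩ := hK.exists_isMinOn
    ⟨(0, z), by constructor <;> simp [le_of_lt hε']⟩ hfc.continuousOn
  rw [isMinOn_iff] at hmin
  set δ := ‖1 - (p₀.1:ℂ) * p₀.2‖ with hδdef
  have hδ : 0 < δ := by
    rw [hδdef]
    exact norm_pos_iff.mpr (Complex.slitPlane_ne_zero (hslit _ hp₀.1 _ hp₀.2))
  have hδle : ∀ t ∈ Set.Icc (0:ℝ) 1, ∀ x ∈ Metric.closedBall z ε',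
      δ ≤ ‖1 - (t:ℂ) * x‖ := by
    intro t ht x hx
    exact hmin (t, x) (Set.mk_mem_prod ht hx)
  -- complex derivative of w ↦ log (1 - t w)
  have hder : ∀ t ∈ Set.Icc (0:ℝ) 1, ∀ x ∈ Metric.closedBall z ε',
      HasDerivAt (fun w : ℂ => Complex.log (1 - (t:ℂ) * w))
        ((1 - (t:ℂ) * x)⁻¹ * (-(t:ℂ))) x := by
    intro t ht x hx
    have h1 : HasDerivAt (fun w : ℂ => 1 - (t:ℂ) * w) (-(t:ℂ)) x := by
      simpa using ((hasDerivAt_id x).const_mul (t:ℂ)).const_sub 1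
    exact (Complex.hasDerivAt_log (hslit t ht x hx)).comp x h1
  -- bound ‖log (1 - t z)‖ ≤ (|z|/δ) t
  have hlogbound : ∀ t ∈ Set.Icc (0:ℝ) 1,
      ‖Complex.log (1 - (t:ℂ) * z)‖ ≤ ‖z‖ / δ * t := by
    intro t ht
    have hzmem : z ∈ Metric.closedBall z ε' := Metric.mem_closedBall_self hε'.le
    have hd : ∀ s ∈ Set.Icc (0:ℝ) 1,
        HasDerivWithinAt (fun s : ℝ => Complex.log (1 - (s:ℂ) * z))
          ((1 - (s:ℂ) * z)⁻¹ * (-z)) (Set.Icc (0:ℝ) 1) s := by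
      intro s hs
      have h1 : HasDerivAt (fun v : ℂ => 1 - v * z) (-z) (s:ℂ) := by
        simpa using ((hasDerivAt_id ((s:ℂ))).mul_const z).const_sub 1
      exact (((Complex.hasDerivAt_log (hslit s hs z hzmem)).comp ((s:ℂ)) h1).comp_ofReal).hasDerivWithinAt
    have hb : ∀ s ∈ Set.Icc (0:ℝ) 1, ‖(1 - (s:ℂ) * z)⁻¹ * (-z)‖ ≤ ‖z‖ / δ := by
      intro s hs
      rw [norm_mul, norm_inv, norm_neg]
      rw [div_eq_mul_inv, mul_comm]
      gcongr
      exact hδle s hs z hzmem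
    have key := (convex_Icc (0:ℝ) 1).norm_image_sub_le_of_norm_hasDerivWithin_le hd hb
      (Set.left_mem_Icc.mpr zero_le_one) ht
    simpa [Real.norm_eq_abs, abs_of_nonneg ht.1] using key
  -- apply differentiation under the integral sign
  have ht0c : ∀ {t : ℝ}, t ∈ Set.Ioc (0:ℝ) 1 → (t:ℂ) ≠ 0 := by
    intro t ht
    exact_mod_cast ne_of_gt ht.1
  have main := intervalIntegral.hasDerivAt_integral_of_dominated_loc_of_deriv_le
    (F := fun x (t : ℝ) => Complex.log (1 - (t:ℂ) * x) / (t:ℂ))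
    (F' := fun x (t : ℝ) => -(1 - (t:ℂ) * x)⁻¹)
    (bound := fun _ => δ⁻¹) (a := 0) (b := 1) (μ := MeasureTheory.volume) (x₀ := z) (Metric.ball_mem_nhds z hε')
    ?_ ?_ ?_ ?_ ?_ ?_
  case refine_1 =>
    filter_upwards with x
    exact ((Complex.measurable_log.comp (measurable_const.sub
      (Complex.measurable_ofReal.mul measurable_const))).div
      Complex.measurable_ofReal).aestronglyMeasurable
  case refine_2 =>
    rw [intervalIntegrable_iff]
    apply MeasureTheory.Integrable.mono' (g := fun _ => ‖z‖ / δ)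
    · exact MeasureTheory.integrableOn_const
        (by rw [Set.uIoc_of_le zero_le_one]; exact measure_Ioc_lt_top.ne)
    · exact ((Complex.measurable_log.comp (measurable_const.sub
        (Complex.measurable_ofReal.mul measurable_const))).div
        Complex.measurable_ofReal).aestronglyMeasurable
    · rw [MeasureTheory.ae_restrict_iff' measurableSet_uIoc]
      filter_upwards with t ht
      rw [Set.uIoc_of_le zero_le_one] at ht
      rw [norm_div, Complex.norm_real, Real.norm_eq_abs,
        abs_of_pos ht.1, div_le_iff₀ ht.1]
      exact hlogbound t (Set.Ioc_subset_Icc_self ht)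
  case refine_3 =>
    exact ((measurable_const.sub (Complex.measurable_ofReal.mul
      measurable_const)).inv.neg).aestronglyMeasurable
  case refine_4 =>
    apply MeasureTheory.ae_of_all
    intro t ht x hx
    rw [Set.uIoc_of_le zero_le_one] at ht
    rw [norm_neg, norm_inv]
    exact inv_anti₀ hδ
      (hδle t (Set.Ioc_subset_Icc_self ht) x (Metric.ball_subset_closedBall hx))
  case refine_5 => exact intervalIntegrable_const
  case refine_6 =>
    apply MeasureTheory.ae_of_all
    intro t ht x hx
    rw [Set.uIoc_of_le zero_le_one] at ht
    have h := (hder t (Set.Ioc_subset_Icc_self ht) x (Metric.ball_subset_closedBall hx)).div_const (t:ℂ)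
    have h0 : (t:ℂ) ≠ 0 := ht0c ht
    have hne : 1 - (t:ℂ) * x ≠ 0 := Complex.slitPlane_ne_zero
      (hslit t (Set.Ioc_subset_Icc_self ht) x (Metric.ball_subset_closedBall hx))
    convert h using 1
    · rfl
    · rw [mul_neg, neg_div, mul_div_assoc, div_self h0, mul_one]
  -- identify the integral of the derivative
  have hint : (∫ t in (0:ℝ)..1, -(1 - (t:ℂ) * z)⁻¹) = Complex.log (1 - z) / z := by
    have hzmem : z ∈ Metric.closedBall z ε' := Metric.mem_closedBall_self hε'.le
    have hF : ∀ t ∈ Set.uIcc (0:ℝ) 1,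
        HasDerivAt (fun t : ℝ => Complex.log (1 - (t:ℂ) * z) / z) (-(1 - (t:ℂ) * z)⁻¹) t := by
      intro t ht
      rw [Set.uIcc_of_le zero_le_one] at ht
      have h1 : HasDerivAt (fun v : ℂ => 1 - v * z) (-z) (t:ℂ) := by
        simpa using ((hasDerivAt_id ((t:ℂ))).mul_const z).const_sub 1
      have h := ((((Complex.hasDerivAt_log (hslit t ht z hzmem)).comp ((t:ℂ)) h1)).div_const z).comp_ofReal
      have hne : 1 - (t:ℂ) * z ≠ 0 := Complex.slitPlane_ne_zero (hslit t ht z hzmem)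
      convert h using 1
      · rfl
      · rw [mul_neg, neg_div, mul_div_assoc, div_self hz0, mul_one]
    have hcont : IntervalIntegrable (fun t : ℝ => -(1 - (t:ℂ) * z)⁻¹)
        MeasureTheory.volume 0 1 := by
      apply ContinuousOn.intervalIntegrable
      apply ContinuousOn.neg
      apply ContinuousOn.inv₀
      · fun_prop
      · intro t ht
        rw [Set.uIcc_of_le zero_le_one] at ht
        exact Complex.slitPlane_ne_zero (hslit t ht z hzmem)
    rw [intervalIntegral.integral_eq_sub_of_hasDerivAt hF hcont]
    simp
  have : HasDerivAt (fun x => -∫ t in (0:ℝ)..1, Complex.log (1 - (t:ℂ) * x) / (t:ℂ))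
      (-(Complex.log (1 - z) / z)) z := by
    rw [← hint]
    exact main.2.neg
  exact this


lemma sincos_aux {s : ℝ} (h0 : 0 < s) (h1 : s < 1) :
    Real.sin (2 * π * s) ≠ 0 ∨ Real.cos (2 * π * s) < 0 := by
  by_cases h : Real.sin (2 * π * s) = 0
  · right
    rw [Real.sin_eq_zero_iff] at h
    obtain ⟨n, hn⟩ := h
    have hπ := Real.pi_pos
    have hn2 : (n : ℝ) = 2 * s := by
      have : (n:ℝ) * π = 2 * s * π := by linarith [hn]
      exact mul_right_cancel₀ (ne_of_gt hπ) this
    have hn1 : n = 1 := by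
      have hl : (0:ℝ) < (n:ℝ) := by rw [hn2]; linarith
      have hu : (n:ℝ) < 2 := by rw [hn2]; linarith
      have hl' : 0 < n := by exact_mod_cast hl
      have hu' : n < 2 := by exact_mod_cast hu
      omega
    have : 2 * π * s = π := by rw [hn1] at hn; push_cast at hn; linarith
    rw [this, Real.cos_pi]
    norm_num
  · left; exact h

lemma exp_cond' {w : ℂ} (h : Real.sin w.im ≠ 0 ∨ Real.cos w.im < 0) :
    (Complex.exp w).im ≠ 0 ∨ (Complex.exp w).re < 1 := by
  rcases h with h | h
  · left; rw [Complex.exp_im]; exact mul_ne_zero (ne_of_gt (Real.exp_pos _)) h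
  · right; rw [Complex.exp_re]
    have := Real.exp_pos w.re
    nlinarith

lemma im_two_pi_I_mul (ζ : ℂ) : (2 * (π:ℂ) * Complex.I * ζ).im = 2 * π * ζ.re := by
  simp [Complex.mul_im, Complex.mul_re]

lemma cond_pos {ζ : ℂ} (h0 : 0 < ζ.re) (h1 : ζ.re < 1) :
    (Complex.exp (2 * (π:ℂ) * Complex.I * ζ)).im ≠ 0 ∨
      (Complex.exp (2 * (π:ℂ) * Complex.I * ζ)).re < 1 := by
  apply exp_cond'
  rw [im_two_pi_I_mul]
  exact sincos_aux h0 h1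

lemma cond_neg {ζ : ℂ} (h0 : 0 < ζ.re) (h1 : ζ.re < 1) :
    (Complex.exp (-(2 * (π:ℂ) * Complex.I) * ζ)).im ≠ 0 ∨
      (Complex.exp (-(2 * (π:ℂ) * Complex.I) * ζ)).re < 1 := by
  apply exp_cond'
  have : (-(2 * (π:ℂ) * Complex.I) * ζ).im = -(2 * π * ζ.re) := by
    have := im_two_pi_I_mul ζ
    have h2 : (-(2 * (π:ℂ) * Complex.I) * ζ) = -(2 * (π:ℂ) * Complex.I * ζ) := by ring
    rw [h2, Complex.neg_im, this]
  rw [this, Real.sin_neg, Real.cos_neg, neg_ne_zero]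
  exact sincos_aux h0 h1

-- explicit exponential values
lemma wl_exp_pi_div_two : Complex.exp ((π:ℂ)/2 * Complex.I) = Complex.I := by
  have h : ((π:ℂ)/2) = ((π/2 : ℝ) : ℂ) := by push_cast; ring
  rw [Complex.exp_mul_I, h, ← Complex.ofReal_cos, ← Complex.ofReal_sin,
    Real.cos_pi_div_two, Real.sin_pi_div_two]
  simp

lemma wl_exp_neg_pi_div_two : Complex.exp (-((π:ℂ)/2 * Complex.I)) = -Complex.I := by
  rw [Complex.exp_neg, wl_exp_pi_div_two, Complex.inv_I]

lemma wl_exp_three_half : Complex.exp (2 * (π:ℂ) * Complex.I * (3/4)) = -Complex.I := by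
  have h : 2 * (π:ℂ) * Complex.I * (3/4) = (π:ℂ)/2 * Complex.I + (π:ℂ) * Complex.I := by ring
  rw [h, Complex.exp_add, wl_exp_pi_div_two, Complex.exp_pi_mul_I]
  ring

lemma wl_exp_neg_three_half : Complex.exp (-(2 * (π:ℂ) * Complex.I) * (3/4)) = Complex.I := by
  have h : -(2 * (π:ℂ) * Complex.I) * (3/4) = -(2 * (π:ℂ) * Complex.I * (3/4)) := by ring
  rw [h, Complex.exp_neg, wl_exp_three_half, inv_neg, Complex.inv_I, neg_neg]

lemma wl_exp_half : Complex.exp (2 * (π:ℂ) * Complex.I * (1/2)) = -1 := by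
  have h : 2 * (π:ℂ) * Complex.I * (1/2) = (π:ℂ) * Complex.I := by ring
  rw [h, Complex.exp_pi_mul_I]

lemma wl_exp_quarter : Complex.exp (2 * (π:ℂ) * Complex.I * (1/4)) = Complex.I := by
  have h : 2 * (π:ℂ) * Complex.I * (1/4) = (π:ℂ)/2 * Complex.I := by ring
  rw [h, wl_exp_pi_div_two]

lemma wl_exp_neg_quarter : Complex.exp (-(2 * (π:ℂ) * Complex.I) * (1/4)) = -Complex.I := by
  have h : -(2 * (π:ℂ) * Complex.I) * (1/4) = -((π:ℂ)/2 * Complex.I) := by ring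
  rw [h, wl_exp_neg_pi_div_two]

-- log identity
lemma log_sum : Complex.log (1 - Complex.I) + Complex.log (1 + Complex.I) = Complex.log 2 := by
  have h1 : (1 - Complex.I) = (starRingEnd ℂ) (1 + Complex.I) := by
    simp [Complex.ext_iff]
  have hne : (1 + Complex.I) ≠ 0 := by
    intro h; have := congrArg Complex.im h; simp at this
  have hne' : (1 - Complex.I) ≠ 0 := by
    intro h; have := congrArg Complex.im h; simp at this
  have harg : Complex.arg (1 - Complex.I) + Complex.arg (1 + Complex.I) = 0 := by
    rw [h1, Complex.arg_conj]
    have : Complex.arg (1 + Complex.I) ≠ π := by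
      intro h
      rw [Complex.arg_eq_pi_iff] at h
      norm_num at h
    simp [this]
  have hmul : (1 - Complex.I) * (1 + Complex.I) = 2 := by
    simp [Complex.ext_iff]; norm_num
  rw [← hmul, Complex.log_mul hne' hne]
  rw [harg]
  constructor
  · linarith [Real.pi_pos]
  · linarith [Real.pi_pos]


lemma li2_comp_hasDerivAt {f : ℂ → ℂ} {f' z₀ : ℂ} (hf : HasDerivAt f f' z₀)
    (h : (f z₀).im ≠ 0 ∨ (f z₀).re < 1) (h0 : f z₀ ≠ 0) :
    HasDerivAt (fun z => Li2 (f z)) (-(Complex.log (1 - f z₀) / f z₀) * f') z₀ :=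
  (li2_hasDerivAt h h0).comp z₀ hf

theorem stmt_3 :
    DifferentiableOn ℂ (fun p : ℂ × ℂ => Phi0 p.1 p.2) OmegaSet ∧
    deriv (fun z => Phi0 z (1/4)) (1/2) = 0 ∧
    deriv (fun z => Phi0 (1/2) z) (1/4) = 0 := by
  have hπ : (π:ℂ) ≠ 0 := by exact_mod_cast Real.pi_ne_zero
  refine ⟨?_, ?_, ?_⟩
  · -- differentiability
    intro p hp
    obtain ⟨h1, h2, h3, h4, h5, h6⟩ := hp
    apply DifferentiableAt.differentiableWithinAt
    have hterm : ∀ (g : ℂ × ℂ → ℂ) (c : ℂ), DifferentiableAt ℂ g p →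
        ((Complex.exp (c * g p)).im ≠ 0 ∨ (Complex.exp (c * g p)).re < 1) →
        DifferentiableAt ℂ (fun q => Li2 (Complex.exp (c * g q))) p := by
      intro g c hg hcond
      exact DifferentiableAt.comp (g := Li2) p ((li2_hasDerivAt hcond (Complex.exp_ne_zero _)).differentiableAt)
        ((hg.const_mul c).cexp)
    have hadd : DifferentiableAt ℂ (fun q : ℂ × ℂ => q.1 + q.2) p :=
      differentiableAt_fst.add differentiableAt_snd
    have t1 := hterm _ _ hadd (cond_neg h5 h6)
    have t2 := hterm _ _ differentiableAt_snd (cond_neg h3 h4)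
    have t3 := hterm _ _ differentiableAt_snd (cond_pos h3 h4)
    have t4 := hterm _ _ hadd (cond_pos h5 h6)
    have t5 := hterm _ _ differentiableAt_fst (cond_pos h1 h2)
    exact (((((t1.sub t2).add t3).sub t4).add t5).const_mul (1 / (2 * (π:ℂ) * Complex.I)))
  · -- first partial derivative
    have e1 : Complex.exp (-(2 * (π:ℂ) * Complex.I) * ((1/2 : ℂ) + 1/4)) = Complex.I := by
      rw [show ((1/2 : ℂ) + 1/4) = (3/4 : ℂ) by norm_num]; exact wl_exp_neg_three_half
    have e4 : Complex.exp (2 * (π:ℂ) * Complex.I * ((1/2 : ℂ) + 1/4)) = -Complex.I := by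
      rw [show ((1/2 : ℂ) + 1/4) = (3/4 : ℂ) by norm_num]; exact wl_exp_three_half
    have T1 : HasDerivAt
        (fun z : ℂ => Li2 (Complex.exp (-(2 * (π:ℂ) * Complex.I) * (z + 1/4))))
        (-(Complex.log (1 - Complex.I) / Complex.I) *
          (Complex.I * (-(2 * (π:ℂ) * Complex.I) * 1))) (1/2 : ℂ) := by
      have hf1 : HasDerivAt (fun z : ℂ => Complex.exp (-(2 * (π:ℂ) * Complex.I) * (z + 1/4)))
          (Complex.I * (-(2 * (π:ℂ) * Complex.I) * 1)) (1/2 : ℂ) := by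
        have h := (((hasDerivAt_id ((1/2 : ℂ))).add_const ((1/4 : ℂ))).const_mul
          (-(2 * (π:ℂ) * Complex.I))).cexp
        simp only [id_eq] at h
        rw [e1] at h
        exact h
      have := li2_comp_hasDerivAt hf1 (by rw [e1]; left; simp) (Complex.exp_ne_zero _)
      rw [e1] at this
      exact this
    have T4 : HasDerivAt
        (fun z : ℂ => Li2 (Complex.exp (2 * (π:ℂ) * Complex.I * (z + 1/4))))
        (-(Complex.log (1 - -Complex.I) / (-Complex.I)) *
          (-Complex.I * (2 * (π:ℂ) * Complex.I * 1))) (1/2 : ℂ) := by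
      have hf4 : HasDerivAt (fun z : ℂ => Complex.exp (2 * (π:ℂ) * Complex.I * (z + 1/4)))
          (-Complex.I * (2 * (π:ℂ) * Complex.I * 1)) (1/2 : ℂ) := by
        have h := (((hasDerivAt_id ((1/2 : ℂ))).add_const ((1/4 : ℂ))).const_mul
          (2 * (π:ℂ) * Complex.I)).cexp
        simp only [id_eq] at h
        rw [e4] at h
        exact h
      have := li2_comp_hasDerivAt hf4 (by rw [e4]; left; simp) (Complex.exp_ne_zero _)
      rw [e4] at this
      exact this
    have T5 : HasDerivAt
        (fun z : ℂ => Li2 (Complex.exp (2 * (π:ℂ) * Complex.I * z)))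
        (-(Complex.log (1 - -1) / (-1)) * (-1 * (2 * (π:ℂ) * Complex.I * 1))) (1/2 : ℂ) := by
      have hf5 : HasDerivAt (fun z : ℂ => Complex.exp (2 * (π:ℂ) * Complex.I * z))
          ((-1 : ℂ) * (2 * (π:ℂ) * Complex.I * 1)) (1/2 : ℂ) := by
        have h := ((hasDerivAt_id ((1/2 : ℂ))).const_mul (2 * (π:ℂ) * Complex.I)).cexp
        simp only [id_eq] at h
        rw [wl_exp_half] at h
        exact h
      have := li2_comp_hasDerivAt hf5 (by rw [wl_exp_half]; right; norm_num) (Complex.exp_ne_zero _)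
      rw [wl_exp_half] at this
      exact this
    have T2 : HasDerivAt
        (fun _ : ℂ => Li2 (Complex.exp (-(2 * (π:ℂ) * Complex.I) * (1/4 : ℂ)))) 0 (1/2 : ℂ) :=
      hasDerivAt_const _ _
    have T3 : HasDerivAt
        (fun _ : ℂ => Li2 (Complex.exp (2 * (π:ℂ) * Complex.I * (1/4 : ℂ)))) 0 (1/2 : ℂ) :=
      hasDerivAt_const _ _
    have H := (((((T1.sub T2).add T3).sub T4).add T5).const_mul (1 / (2 * (π:ℂ) * Complex.I)))
    have H' : HasDerivAt (fun z => Phi0 z (1/4)) _ (1/2 : ℂ) := H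
    rw [H'.deriv]
    have hlog := log_sum
    have h2 : (1 : ℂ) - -1 = 2 := by norm_num
    rw [h2]
    field_simp
    rw [show (1:ℂ) - -Complex.I = 1 + Complex.I by ring]
    linear_combination (2 * (π:ℂ) * Complex.I) * hlog
  · -- second partial derivative
    have e1 : Complex.exp (-(2 * (π:ℂ) * Complex.I) * ((1/2 : ℂ) + 1/4)) = Complex.I := by
      rw [show ((1/2 : ℂ) + 1/4) = (3/4 : ℂ) by norm_num]; exact wl_exp_neg_three_half
    have e4 : Complex.exp (2 * (π:ℂ) * Complex.I * ((1/2 : ℂ) + 1/4)) = -Complex.I := by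
      rw [show ((1/2 : ℂ) + 1/4) = (3/4 : ℂ) by norm_num]; exact wl_exp_three_half
    have eq2 : Complex.exp (-(2 * (π:ℂ) * Complex.I) * (1/4 : ℂ)) = -Complex.I :=
      wl_exp_neg_quarter
    have T1 : HasDerivAt
        (fun z : ℂ => Li2 (Complex.exp (-(2 * (π:ℂ) * Complex.I) * (1/2 + z))))
        (-(Complex.log (1 - Complex.I) / Complex.I) *
          (Complex.I * (-(2 * (π:ℂ) * Complex.I) * 1))) (1/4 : ℂ) := by
      have hf1 : HasDerivAt (fun z : ℂ => Complex.exp (-(2 * (π:ℂ) * Complex.I) * (1/2 + z)))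
          (Complex.I * (-(2 * (π:ℂ) * Complex.I) * 1)) (1/4 : ℂ) := by
        have h := (((hasDerivAt_id ((1/4 : ℂ))).const_add ((1/2 : ℂ))).const_mul
          (-(2 * (π:ℂ) * Complex.I))).cexp
        simp only [id_eq] at h
        rw [e1] at h
        exact h
      have := li2_comp_hasDerivAt hf1 (by rw [e1]; left; simp) (Complex.exp_ne_zero _)
      rw [e1] at this
      exact this
    have T2 : HasDerivAt
        (fun z : ℂ => Li2 (Complex.exp (-(2 * (π:ℂ) * Complex.I) * z)))
        (-(Complex.log (1 - -Complex.I) / (-Complex.I)) *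
          (-Complex.I * (-(2 * (π:ℂ) * Complex.I) * 1))) (1/4 : ℂ) := by
      have hf2 : HasDerivAt (fun z : ℂ => Complex.exp (-(2 * (π:ℂ) * Complex.I) * z))
          (-Complex.I * (-(2 * (π:ℂ) * Complex.I) * 1)) (1/4 : ℂ) := by
        have h := ((hasDerivAt_id ((1/4 : ℂ))).const_mul (-(2 * (π:ℂ) * Complex.I))).cexp
        simp only [id_eq] at h
        rw [eq2] at h
        exact h
      have := li2_comp_hasDerivAt hf2 (by rw [eq2]; left; simp) (Complex.exp_ne_zero _)
      rw [eq2] at this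
      exact this
    have T3 : HasDerivAt
        (fun z : ℂ => Li2 (Complex.exp (2 * (π:ℂ) * Complex.I * z)))
        (-(Complex.log (1 - Complex.I) / Complex.I) *
          (Complex.I * (2 * (π:ℂ) * Complex.I * 1))) (1/4 : ℂ) := by
      have hf3 : HasDerivAt (fun z : ℂ => Complex.exp (2 * (π:ℂ) * Complex.I * z))
          (Complex.I * (2 * (π:ℂ) * Complex.I * 1)) (1/4 : ℂ) := by
        have h := ((hasDerivAt_id ((1/4 : ℂ))).const_mul (2 * (π:ℂ) * Complex.I)).cexp
        simp only [id_eq] at h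
        rw [wl_exp_quarter] at h
        exact h
      have := li2_comp_hasDerivAt hf3 (by rw [wl_exp_quarter]; left; simp) (Complex.exp_ne_zero _)
      rw [wl_exp_quarter] at this
      exact this
    have T4 : HasDerivAt
        (fun z : ℂ => Li2 (Complex.exp (2 * (π:ℂ) * Complex.I * (1/2 + z))))
        (-(Complex.log (1 - -Complex.I) / (-Complex.I)) *
          (-Complex.I * (2 * (π:ℂ) * Complex.I * 1))) (1/4 : ℂ) := by
      have hf4 : HasDerivAt (fun z : ℂ => Complex.exp (2 * (π:ℂ) * Complex.I * (1/2 + z)))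
          (-Complex.I * (2 * (π:ℂ) * Complex.I * 1)) (1/4 : ℂ) := by
        have h := (((hasDerivAt_id ((1/4 : ℂ))).const_add ((1/2 : ℂ))).const_mul
          (2 * (π:ℂ) * Complex.I)).cexp
        simp only [id_eq] at h
        rw [e4] at h
        exact h
      have := li2_comp_hasDerivAt hf4 (by rw [e4]; left; simp) (Complex.exp_ne_zero _)
      rw [e4] at this
      exact this
    have T5 : HasDerivAt
        (fun _ : ℂ => Li2 (Complex.exp (2 * (π:ℂ) * Complex.I * (1/2 : ℂ)))) 0 (1/4 : ℂ) :=
      hasDerivAt_const _ _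
    have H := (((((T1.sub T2).add T3).sub T4).add T5).const_mul (1 / (2 * (π:ℂ) * Complex.I)))
    have H' : HasDerivAt (fun z => Phi0 (1/2) z) _ (1/4 : ℂ) := H
    rw [H'.deriv]
    field_simp
    ring
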